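/- Suppose $\jump{\rho_0}=\rho_0^+-\rho_0^->0$ and $\rho_0/P'(\rho_0)$ is bounded on $(-m,0)\cup(0,\ell)$. Then there exists $\psi\in H^1_0((-m,\ell))$ with $\psi(0)=1$ such that $\tilde E(\psi):=\int_{-m}^{\ell} g\,\rho_0\,\psi\,\psi'\,dx_3<0$. In particular, for every $|\xi|>0$, $\inf\{E(\varphi,\psi):(\varphi,\psi)\in\mathcal{A}\}<0$. -/

import Mathlib

open Set MeasureTheory


lemma hasDerivAt_posSq (x : ℝ) : HasDerivAt (fun t : ℝ => (max t 0)^2) (2 * max x 0) x := by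
  rcases lt_trichotomy x 0 with hx | hx | hx
  · have h : (fun t : ℝ => (max t 0)^2) =ᶠ[nhds x] (fun _ => (0:ℝ)) := by
      filter_upwards [Iio_mem_nhds hx] with t ht
      simp [max_eq_right (le_of_lt (mem_Iio.mp ht))]
    have := (hasDerivAt_const x (0:ℝ)).congr_of_eventuallyEq h
    simpa [max_eq_right hx.le] using this
  · subst hx
    rw [hasDerivAt_iff_tendsto_slope]
    simp only [max_eq_right le_rfl, mul_zero]
    apply squeeze_zero_norm' (a := fun t => |t|)
    · filter_upwards [self_mem_nhdsWithin] with t ht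
      have ht' : t ≠ 0 := ht
      rw [slope_def_field]
      rcases le_or_gt t 0 with h | h
      · simp [max_eq_right h, abs_nonneg]
      · rw [max_eq_left h.le]
        have : (t ^ 2 - (max (0:ℝ) 0) ^ 2) / (t - 0) = t := by
          simp only [max_self, sub_zero]
          field_simp [pow_two]
          ring
        rw [this]
        simp
    · have : Filter.Tendsto (fun t : ℝ => |t|) (nhds 0) (nhds 0) := by
        simpa using continuous_abs.tendsto (0:ℝ)
      exact this.mono_left nhdsWithin_le_nhds
  · have h : (fun t : ℝ => (max t 0)^2) =ᶠ[nhds x] (fun t => t^2) := by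
      filter_upwards [Ioi_mem_nhds hx] with t ht
      simp [max_eq_left (le_of_lt (mem_Ioi.mp ht))]
    have := ((hasDerivAt_pow 2 x)).congr_of_eventuallyEq h
    simpa [max_eq_left hx.le, mul_comm] using this


lemma II_of_bdd {a b M : ℝ} {f : ℝ → ℝ} (hab : a ≤ b) (hcont : ContinuousOn f (Ioo a b))
    (hM : ∀ x ∈ Ioo a b, |f x| ≤ M) : IntervalIntegrable f volume a b := by
  rw [intervalIntegrable_iff_integrableOn_Ioo_of_le hab]
  refine ⟨hcont.aestronglyMeasurable measurableSet_Ioo, ?_⟩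
  apply HasFiniteIntegral.restrict_of_bounded (C := M)
  · simp [Real.volume_Ioo]
  · exact (ae_restrict_iff' measurableSet_Ioo).2 (ae_of_all _ (fun x hx => by
      simpa using hM x hx))

lemma ae_restrict_Icc_of_Ioo {a b : ℝ} {P : ℝ → Prop} (h : ∀ x ∈ Ioo a b, x ≠ 0 → P x) :
    ∀ᵐ x ∂(volume.restrict (Icc a b)), P x := by
  rw [ae_restrict_iff' measurableSet_Icc]
  have hsub : {x : ℝ | ¬ (x ∈ Icc a b → P x)} ⊆ {a, b, 0} := by
    intro x hx
    simp only [mem_setOf_eq, Classical.not_imp] at hx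
    by_contra hmem
    simp only [mem_insert_iff, mem_singleton_iff, not_or] at hmem
    obtain ⟨h1, h2, h3⟩ := hmem
    exact hx.2 (h x ⟨lt_of_le_of_ne hx.1.1 (Ne.symm h1), lt_of_le_of_ne hx.1.2 h2⟩ h3)
  have hc : volume ({a, b, 0} : Set ℝ) = 0 :=
    (((countable_singleton (0:ℝ)).insert b).insert a).measure_zero _
  exact measure_mono_null hsub hc


noncomputable def psiT (δ x : ℝ) : ℝ := (max (1 - |x|/δ) 0)^2

lemma psiT_cont (δ : ℝ) : Continuous (psiT δ) := by
  unfold psiT; fun_prop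

lemma psiT_zero (δ : ℝ) : psiT δ 0 = 1 := by simp [psiT]

lemma psiT_eq_zero {δ x : ℝ} (hδ : 0 < δ) (h : δ ≤ |x|) : psiT δ x = 0 := by
  have : 1 - |x|/δ ≤ 0 := by
    rw [sub_nonpos, le_div_iff₀ hδ, one_mul]; exact h
  simp [psiT, max_eq_right this]

lemma psiT_nonneg (δ x : ℝ) : 0 ≤ psiT δ x := sq_nonneg _

lemma psiT_le_one {δ : ℝ} (hδ : 0 < δ) (x : ℝ) : psiT δ x ≤ 1 := by
  have h1 : max (1 - |x|/δ) 0 ≤ 1 := by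
    apply max_le _ zero_le_one
    have : 0 ≤ |x|/δ := div_nonneg (abs_nonneg x) hδ.le
    linarith
  have h0 : (0:ℝ) ≤ max (1 - |x|/δ) 0 := le_max_right _ _
  calc (max (1 - |x|/δ) 0)^2 ≤ 1^2 := by nlinarith
    _ = 1 := one_pow 2

lemma psiT_quarter {δ x : ℝ} (hδ : 0 < δ) (h : |x| ≤ δ/2) : 1/4 ≤ psiT δ x := by
  have h1 : |x|/δ ≤ 1/2 := by
    rw [div_le_iff₀ hδ]; linarith
  have h2 : (1:ℝ)/2 ≤ max (1 - |x|/δ) 0 := le_max_of_le_left (by linarith)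
  calc (1:ℝ)/4 = (1/2)^2 := by norm_num
    _ ≤ (max (1 - |x|/δ) 0)^2 := by nlinarith
  
lemma psiT_hasDeriv_neg {δ x : ℝ} (hδ : 0 < δ) (hx : x < 0) :
    HasDerivAt (psiT δ) (2 * max (1 - |x|/δ) 0 / δ) x := by
  have hu : HasDerivAt (fun t : ℝ => 1 + t/δ) (1/δ) x :=
    ((hasDerivAt_id x).div_const δ).const_add 1
  have hcomp := (hasDerivAt_posSq (1 + x/δ)).comp x hu
  have heq : psiT δ =ᶠ[nhds x] (fun t => (max (1 + t/δ) 0)^2) := by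
    filter_upwards [Iio_mem_nhds hx] with t ht
    have : |t| = -t := abs_of_neg (mem_Iio.mp ht)
    simp [psiT, this, sub_eq_add_neg, neg_div]
  have h2 := (hcomp.congr_of_eventuallyEq heq)
  have : |x| = -x := abs_of_neg hx
  rw [this]
  refine h2.congr_deriv ?_
  rw [show 1 - -x/δ = 1 + x/δ by ring]
  ring

lemma psiT_hasDeriv_pos {δ x : ℝ} (hδ : 0 < δ) (hx : 0 < x) :
    HasDerivAt (psiT δ) (-(2 * max (1 - |x|/δ) 0 / δ)) x := by
  have hu : HasDerivAt (fun t : ℝ => 1 - t/δ) (-(1/δ)) x := by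
    simpa using ((hasDerivAt_id x).div_const δ).const_sub 1
  have hcomp := (hasDerivAt_posSq (1 - x/δ)).comp x hu
  have heq : psiT δ =ᶠ[nhds x] (fun t => (max (1 - t/δ) 0)^2) := by
    filter_upwards [Ioi_mem_nhds hx] with t ht
    have : |t| = t := abs_of_pos (mem_Ioi.mp ht)
    simp [psiT, this]
  have h2 := (hcomp.congr_of_eventuallyEq heq)
  have : |x| = x := abs_of_pos hx
  rw [this]
  refine h2.congr_deriv ?_
  ring

lemma integ_p {δ : ℝ} (hδ : 0 < δ) :
    (∫ x in (-δ)..0, 2*(1+x/δ)^3/δ) = 1/2 := by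
  have key : ∀ x ∈ uIcc (-δ) (0:ℝ), HasDerivAt (fun t => (1+t/δ)^4/2) (2*(1+x/δ)^3/δ) x := by
    intro x _
    have hu : HasDerivAt (fun t : ℝ => 1 + t/δ) (1/δ) x :=
      ((hasDerivAt_id x).div_const δ).const_add 1
    have := (hu.pow 4).div_const 2
    refine this.congr_deriv ?_
    push_cast
    ring
  have hint : IntervalIntegrable (fun x => 2*(1+x/δ)^3/δ) volume (-δ) 0 := by
    apply Continuous.intervalIntegrable; fun_prop
  have := intervalIntegral.integral_eq_sub_of_hasDerivAt key hint
  rw [this]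
  have hd : δ ≠ 0 := hδ.ne'
  field_simp
  ring

lemma integ_q {δ : ℝ} (hδ : 0 < δ) :
    (∫ x in (0:ℝ)..δ, 2*(1-x/δ)^3/δ) = 1/2 := by
  have key : ∀ x ∈ uIcc (0:ℝ) δ, HasDerivAt (fun t => -((1-t/δ)^4/2)) (2*(1-x/δ)^3/δ) x := by
    intro x _
    have hu : HasDerivAt (fun t : ℝ => 1 - t/δ) (-(1/δ)) x := by
      simpa using ((hasDerivAt_id x).div_const δ).const_sub 1
    have := ((hu.pow 4).div_const 2).neg
    refine this.congr_deriv ?_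
    push_cast
    ring
  have hint : IntervalIntegrable (fun x => 2*(1-x/δ)^3/δ) volume 0 δ := by
    apply Continuous.intervalIntegrable; fun_prop
  have := intervalIntegral.integral_eq_sub_of_hasDerivAt key hint
  rw [this]
  have hd : δ ≠ 0 := hδ.ne'
  field_simp
  ring


lemma rho_near_bound_neg (m ℓ g c C q : ℝ) (ρ0 Q : ℝ → ℝ) (rhoM : ℝ)
    (hm : 0 < m) (hg : 0 < g) (hc : 0 < c) (hq : 0 < q) (hℓ : 0 < ℓ)
    (hρbd : ∀ x ∈ Ioo (-m) ℓ, c ≤ ρ0 x ∧ ρ0 x ≤ C)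
    (hQbd : ∀ x ∈ Ioo (-m) ℓ, q ≤ Q x)
    (hode : ∀ x ∈ Ioo (-m) ℓ, x ≠ 0 → HasDerivAt ρ0 (-g * ρ0 x / Q x) x)
    (hlimM : Filter.Tendsto ρ0 (nhdsWithin 0 (Iio 0)) (nhds rhoM))
    (δ : ℝ) (hδ : 0 < δ) (hδm : δ ≤ m) :
    ∀ x ∈ Ioo (-δ) 0, ρ0 x ≤ rhoM + (g*C/q)*δ := by
  have hcC : c ≤ C := by
    have h := hρbd (ℓ/2) ⟨by linarith, by linarith⟩
    linarith [h.1, h.2]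
  have hC : 0 < C := lt_of_lt_of_le hc hcC
  intro x hx
  obtain ⟨hx1, hx2⟩ := hx
  set K := g*C/q with hK
  have hKnn : 0 ≤ K := by positivity
  have hsub : Ico x 0 ⊆ Ioo (-m) ℓ := fun y hy =>
    ⟨by have := hy.1; linarith, by have := hy.2; linarith⟩
  -- MVT estimate on Ico x 0
  have hlip : ∀ y ∈ Ico x 0, ‖ρ0 y - ρ0 x‖ ≤ K * ‖y - x‖ := by
    intro y hy
    apply Convex.norm_image_sub_le_of_norm_hasDerivWithin_le
      (f' := fun y => -g * ρ0 y / Q y)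
      (fun z hz => ((hode z (hsub hz) (fun h => absurd (h ▸ hz.2) (lt_irrefl 0))).hasDerivWithinAt))
      ?_ (convex_Ico x 0) (left_mem_Ico.mpr hx2) hy
    intro z hz
    have hz' := hsub hz
    have hρ := hρbd z hz'
    have hQ := hQbd z hz'
    rw [Real.norm_eq_abs, abs_div, abs_mul, abs_of_nonpos (by linarith : -g ≤ (0:ℝ)),
      abs_of_nonneg (by linarith [hρ.1] : (0:ℝ) ≤ ρ0 z), abs_of_nonneg (by linarith : (0:ℝ) ≤ Q z),
      neg_neg]
    exact div_le_div₀ (by positivity) (by nlinarith [hρ.2]) hq hQ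
  -- pass to the limit y → 0⁻
  have hkey : ∀ y ∈ Ico x 0, ρ0 x - K*δ ≤ ρ0 y := by
    intro y hy
    have h1 := hlip y hy
    rw [Real.norm_eq_abs, Real.norm_eq_abs] at h1
    have h2 : |y - x| ≤ δ := by
      rw [abs_of_nonneg (by linarith [hy.1] : (0:ℝ) ≤ y - x)]
      have := hy.2
      linarith
    have := abs_le.mp (le_trans h1 (by nlinarith : K * |y - x| ≤ K * δ))
    linarith [this.1]
  have hne : (nhdsWithin (0:ℝ) (Ico x 0)).NeBot := by
    apply mem_closure_iff_nhdsWithin_neBot.mp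
    rw [closure_Ico (ne_of_lt hx2)]
    exact right_mem_Icc.mpr hx2.le
  have htend : Filter.Tendsto ρ0 (nhdsWithin 0 (Ico x 0)) (nhds rhoM) :=
    hlimM.mono_left (nhdsWithin_mono 0 (fun y hy => hy.2))
  have := ge_of_tendsto htend (by
    filter_upwards [self_mem_nhdsWithin] with y hy
    exact hkey y hy)
  linarith

lemma rho_near_bound_pos (m ℓ g c C q : ℝ) (ρ0 Q : ℝ → ℝ) (rhoP : ℝ)
    (hm : 0 < m) (hg : 0 < g) (hc : 0 < c) (hq : 0 < q) (hℓ : 0 < ℓ)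
    (hρbd : ∀ x ∈ Ioo (-m) ℓ, c ≤ ρ0 x ∧ ρ0 x ≤ C)
    (hQbd : ∀ x ∈ Ioo (-m) ℓ, q ≤ Q x)
    (hode : ∀ x ∈ Ioo (-m) ℓ, x ≠ 0 → HasDerivAt ρ0 (-g * ρ0 x / Q x) x)
    (hlimP : Filter.Tendsto ρ0 (nhdsWithin 0 (Ioi 0)) (nhds rhoP))
    (δ : ℝ) (hδ : 0 < δ) (hδℓ : δ ≤ ℓ) :
    ∀ x ∈ Ioo 0 δ, rhoP - (g*C/q)*δ ≤ ρ0 x := by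
  have hcC : c ≤ C := by
    have h := hρbd (ℓ/2) ⟨by linarith, by linarith⟩
    linarith [h.1, h.2]
  have hC : 0 < C := lt_of_lt_of_le hc hcC
  intro x hx
  obtain ⟨hx1, hx2⟩ := hx
  set K := g*C/q with hK
  have hKnn : 0 ≤ K := by positivity
  have hsub : Ioc 0 x ⊆ Ioo (-m) ℓ := fun y hy =>
    ⟨by have := hy.1; linarith, by have h := hy.2; linarith⟩
  have hlip : ∀ y ∈ Ioc 0 x, ‖ρ0 y - ρ0 x‖ ≤ K * ‖y - x‖ := by
    intro y hy
    apply Convex.norm_image_sub_le_of_norm_hasDerivWithin_le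
      (f' := fun y => -g * ρ0 y / Q y)
      (fun z hz => ((hode z (hsub hz) (ne_of_gt hz.1)).hasDerivWithinAt))
      ?_ (convex_Ioc 0 x) (right_mem_Ioc.mpr hx1) hy
    intro z hz
    have hz' := hsub hz
    have hρ := hρbd z hz'
    have hQ := hQbd z hz'
    rw [Real.norm_eq_abs, abs_div, abs_mul, abs_of_nonpos (by linarith : -g ≤ (0:ℝ)),
      abs_of_nonneg (by linarith [hρ.1] : (0:ℝ) ≤ ρ0 z), abs_of_nonneg (by linarith : (0:ℝ) ≤ Q z),
      neg_neg]
    exact div_le_div₀ (by positivity) (by nlinarith [hρ.2]) hq hQ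
  have hkey : ∀ y ∈ Ioc 0 x, ρ0 y - K*δ ≤ ρ0 x := by
    intro y hy
    have h1 := hlip y hy
    rw [Real.norm_eq_abs, Real.norm_eq_abs] at h1
    have h2 : |y - x| ≤ δ := by
      rw [abs_of_nonpos (by linarith [hy.2] : y - x ≤ (0:ℝ))]
      have := hy.1
      linarith
    have := abs_le.mp (le_trans h1 (by nlinarith : K * |y - x| ≤ K * δ))
    linarith [this.2]
  have hne : (nhdsWithin (0:ℝ) (Ioc 0 x)).NeBot := by
    apply mem_closure_iff_nhdsWithin_neBot.mp
    rw [closure_Ioc (ne_of_lt hx1)]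
    exact left_mem_Icc.mpr hx1.le
  have htend : Filter.Tendsto ρ0 (nhdsWithin 0 (Ioc 0 x)) (nhds rhoP) :=
    hlimP.mono_left (nhdsWithin_mono 0 (fun y hy => hy.1))
  have := le_of_tendsto htend (by
    filter_upwards [self_mem_nhdsWithin] with y hy
    have := hkey y hy
    linarith : ∀ᶠ y in nhdsWithin 0 (Ioc 0 x), ρ0 y ≤ ρ0 x + K*δ)
  linarith

set_option maxHeartbeats 4000000 in
theorem energy_infimum_negative
    (m ℓ g : ℝ) (hm : 0 < m) (hℓ : 0 < ℓ) (hg : 0 < g)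
    (ρ0 Q : ℝ → ℝ) (rhoP rhoM : ℝ) (hjump : rhoM < rhoP)
    (c C q Q' : ℝ) (hc : 0 < c) (hq : 0 < q)
    (hρbd : ∀ x ∈ Ioo (-m) ℓ, c ≤ ρ0 x ∧ ρ0 x ≤ C)
    (hQbd : ∀ x ∈ Ioo (-m) ℓ, q ≤ Q x ∧ Q x ≤ Q')
    (hcontM : ContinuousOn ρ0 (Ioo (-m) 0))
    (hcontP : ContinuousOn ρ0 (Ioo 0 ℓ))
    (hQcontM : ContinuousOn Q (Ioo (-m) 0))
    (hQcontP : ContinuousOn Q (Ioo 0 ℓ))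
    (hode : ∀ x ∈ Ioo (-m) ℓ, x ≠ 0 → HasDerivAt ρ0 (-g * ρ0 x / Q x) x)
    (hlimP : Filter.Tendsto ρ0 (nhdsWithin 0 (Ioi 0)) (nhds rhoP))
    (hlimM : Filter.Tendsto ρ0 (nhdsWithin 0 (Iio 0)) (nhds rhoM)) :
    (∃ ψ : ℝ → ℝ,
      ContinuousOn ψ (Icc (-m) ℓ) ∧ ψ (-m) = 0 ∧ ψ ℓ = 0 ∧ ψ 0 = 1 ∧
      (∀ x ∈ Ioo (-m) ℓ, x ≠ 0 → DifferentiableAt ℝ ψ x) ∧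
      IntervalIntegrable (fun x => (deriv ψ x) ^ 2) MeasureTheory.volume (-m) ℓ ∧
      (∫ x in (-m)..ℓ, g * ρ0 x * ψ x * deriv ψ x) < 0)
    ∧ ∀ ξ : ℝ, 0 < ξ →
      sInf {e : ℝ | ∃ φ ψ : ℝ → ℝ,
        ContinuousOn ψ (Icc (-m) ℓ) ∧ ψ (-m) = 0 ∧ ψ ℓ = 0 ∧
        (∀ x ∈ Ioo (-m) ℓ, x ≠ 0 → DifferentiableAt ℝ ψ x) ∧
        IntervalIntegrable (fun x => (φ x) ^ 2) MeasureTheory.volume (-m) ℓ ∧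
        IntervalIntegrable (fun x => (deriv ψ x) ^ 2) MeasureTheory.volume (-m) ℓ ∧
        (1 / 2) * (∫ x in (-m)..ℓ, ρ0 x * ((φ x) ^ 2 + (ψ x) ^ 2)) = 1 ∧
        e = (1 / 2) * ∫ x in (-m)..ℓ,
              (Q x * ρ0 x * (deriv ψ x + ξ * φ x) ^ 2
                - 2 * g * ρ0 x * ξ * ψ x * φ x)} < 0 := by
  -- constants
  have hcC : c ≤ C := by
    have h := hρbd (ℓ/2) ⟨by linarith, by linarith⟩
    linarith [h.1, h.2]
  have hC : 0 < C := lt_of_lt_of_le hc hcC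
  have hjd : 0 < rhoP - rhoM := by linarith
  set K := g*C/q with hKdef
  have hKpos : 0 < K := by positivity
  set δ := min (min m ℓ) ((rhoP - rhoM)/(4*K)) with hδdef
  have hδpos : 0 < δ := lt_min (lt_min hm hℓ) (by positivity)
  have hδm : δ ≤ m := le_trans (min_le_left _ _) (min_le_left _ _)
  have hδℓ : δ ≤ ℓ := le_trans (min_le_left _ _) (min_le_right _ _)
  have hδK : 2*K*δ ≤ (rhoP - rhoM)/2 := by
    have h1 : δ ≤ (rhoP - rhoM)/(4*K) := min_le_right _ _
    have h2 : 2*K*δ ≤ 2*K*((rhoP - rhoM)/(4*K)) := by nlinarith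
    have h3 : 2*K*((rhoP - rhoM)/(4*K)) = (rhoP - rhoM)/2 := by
      field_simp; ring
    linarith
  -- the test function
  have hψcont := psiT_cont δ
  have hψm : psiT δ (-m) = 0 := psiT_eq_zero hδpos (by rw [abs_of_nonpos (by linarith)]; linarith)
  have hψℓ : psiT δ ℓ = 0 := psiT_eq_zero hδpos (by rw [abs_of_nonneg (by linarith)]; linarith)
  have hψ0 : psiT δ 0 = 1 := psiT_zero δ
  -- derivative facts
  have hdiff : ∀ x : ℝ, x ≠ 0 → DifferentiableAt ℝ (psiT δ) x := by
    intro x hx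
    rcases hx.lt_or_gt with h | h
    · exact (psiT_hasDeriv_neg hδpos h).differentiableAt
    · exact (psiT_hasDeriv_pos hδpos h).differentiableAt
  have hderivM : ∀ x : ℝ, x < 0 → deriv (psiT δ) x = 2 * max (1 - |x|/δ) 0 / δ :=
    fun x hx => (psiT_hasDeriv_neg hδpos hx).deriv
  have hderivP : ∀ x : ℝ, 0 < x → deriv (psiT δ) x = -(2 * max (1 - |x|/δ) 0 / δ) :=
    fun x hx => (psiT_hasDeriv_pos hδpos hx).deriv
  have hmaxbd : ∀ x : ℝ, 0 ≤ max (1 - |x|/δ) 0 ∧ max (1 - |x|/δ) 0 ≤ 1 := by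
    intro x
    refine ⟨le_max_right _ _, max_le ?_ zero_le_one⟩
    have : 0 ≤ |x|/δ := div_nonneg (abs_nonneg x) hδpos.le
    linarith
  have hDbd : ∀ x : ℝ, x ≠ 0 → |deriv (psiT δ) x| ≤ 2/δ := by
    intro x hx
    have hb := hmaxbd x
    rcases hx.lt_or_gt with h | h
    · rw [hderivM x h, abs_of_nonneg (by positivity : (0:ℝ) ≤ 2 * max (1 - |x|/δ) 0 / δ)]
      rw [div_le_div_iff₀ hδpos hδpos]
      nlinarith
    · rw [hderivP x h, abs_neg, abs_of_nonneg (by positivity : (0:ℝ) ≤ 2 * max (1 - |x|/δ) 0 / δ)]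
      rw [div_le_div_iff₀ hδpos hδpos]
      nlinarith
  -- continuity of deriv on the two pieces
  have hDmcont : Continuous (fun x : ℝ => 2 * max (1 - |x|/δ) 0 / δ) := by fun_prop
  have hcderivM : ContinuousOn (deriv (psiT δ)) (Ioo (-m) 0) :=
    hDmcont.continuousOn.congr (fun x hx => hderivM x hx.2)
  have hcderivP : ContinuousOn (deriv (psiT δ)) (Ioo 0 ℓ) :=
    hDmcont.neg.continuousOn.congr (fun x hx => hderivP x hx.1)
  -- the main integrand
  have hhcontM : ContinuousOn (fun x => g * ρ0 x * psiT δ x * deriv (psiT δ) x) (Ioo (-m) 0) :=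
    ((continuousOn_const.mul hcontM).mul hψcont.continuousOn).mul hcderivM
  have hhcontP : ContinuousOn (fun x => g * ρ0 x * psiT δ x * deriv (psiT δ) x) (Ioo 0 ℓ) :=
    ((continuousOn_const.mul hcontP).mul hψcont.continuousOn).mul hcderivP
  have hhbd : ∀ x ∈ Ioo (-m) ℓ, x ≠ 0 → |g * ρ0 x * psiT δ x * deriv (psiT δ) x| ≤ g*C*(2/δ) := by
    intro x hx hx0
    have h1 := hρbd x hx
    have h2 := hDbd x hx0
    have h3 := psiT_nonneg δ x
    have h4 := psiT_le_one hδpos x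
    rw [abs_mul, abs_mul, abs_mul, abs_of_pos hg, abs_of_nonneg (by linarith [h1.1]),
      abs_of_nonneg h3]
    have hρpos : 0 < ρ0 x := lt_of_lt_of_le hc h1.1
    have step1 : g * ρ0 x * psiT δ x ≤ g * C := by
      have t1 : g * ρ0 x * psiT δ x ≤ g * ρ0 x * 1 := mul_le_mul_of_nonneg_left h4 (by positivity)
      nlinarith [h1.2]
    have step0 : 0 ≤ g * ρ0 x * psiT δ x := by positivity
    exact mul_le_mul step1 h2 (abs_nonneg _) (by positivity)
  -- interval integrability on the four pieces
  have II1 : IntervalIntegrable (fun x => g * ρ0 x * psiT δ x * deriv (psiT δ) x) volume (-m) (-δ) :=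
    II_of_bdd (by linarith) (hhcontM.mono (fun x hx => ⟨hx.1, by linarith [hx.2]⟩))
      (fun x hx => hhbd x ⟨hx.1, by linarith [hx.2]⟩ (by intro h; rw [h] at hx; linarith [hx.2]))
  have II2 : IntervalIntegrable (fun x => g * ρ0 x * psiT δ x * deriv (psiT δ) x) volume (-δ) 0 :=
    II_of_bdd (by linarith) (hhcontM.mono (fun x hx => ⟨by linarith [hx.1], hx.2⟩))
      (fun x hx => hhbd x ⟨by linarith [hx.1], by linarith [hx.2]⟩ (ne_of_lt hx.2))
  have II3 : IntervalIntegrable (fun x => g * ρ0 x * psiT δ x * deriv (psiT δ) x) volume 0 δ :=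
    II_of_bdd (by linarith) (hhcontP.mono (fun x hx => ⟨hx.1, by linarith [hx.2]⟩))
      (fun x hx => hhbd x ⟨by linarith [hx.1], by linarith [hx.2]⟩ (ne_of_gt hx.1))
  have II4 : IntervalIntegrable (fun x => g * ρ0 x * psiT δ x * deriv (psiT δ) x) volume δ ℓ :=
    II_of_bdd (by linarith) (hhcontP.mono (fun x hx => ⟨by linarith [hx.1], hx.2⟩))
      (fun x hx => hhbd x ⟨by linarith [hx.1], hx.2⟩ (by intro h; rw [h] at hx; linarith [hx.1]))
  -- density bounds near the jump
  have hρM := rho_near_bound_neg m ℓ g c C q ρ0 Q rhoM hm hg hc hq hℓ hρbd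
    (fun x hx => (hQbd x hx).1) hode hlimM δ hδpos hδm
  have hρP := rho_near_bound_pos m ℓ g c C q ρ0 Q rhoP hm hg hc hq hℓ hρbd
    (fun x hx => (hQbd x hx).1) hode hlimP δ hδpos hδℓ
  rw [← hKdef] at hρM hρP
  -- piece 1 and 4 vanish
  have hpiece1 : (∫ x in (-m)..(-δ), g * ρ0 x * psiT δ x * deriv (psiT δ) x) = 0 := by
    rw [intervalIntegral.integral_congr (g := fun _ => (0:ℝ))
      (fun x hx => by
        rw [uIcc_of_le (by linarith : -m ≤ -δ)] at hx
        have : δ ≤ |x| := by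
          rw [abs_of_nonpos (by linarith [hx.2] : x ≤ 0)]; linarith [hx.2]
        simp [psiT_eq_zero hδpos this])]
    simp
  have hpiece4 : (∫ x in δ..ℓ, g * ρ0 x * psiT δ x * deriv (psiT δ) x) = 0 := by
    rw [intervalIntegral.integral_congr (g := fun _ => (0:ℝ))
      (fun x hx => by
        rw [uIcc_of_le (by linarith : δ ≤ ℓ)] at hx
        have : δ ≤ |x| := by
          rw [abs_of_nonneg (by linarith [hx.1] : (0:ℝ) ≤ x)]; linarith [hx.1]
        simp [psiT_eq_zero hδpos this])]
    simp
  -- piece 2 bound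
  have hpiece2 : (∫ x in (-δ)..0, g * ρ0 x * psiT δ x * deriv (psiT δ) x)
      ≤ (g*(rhoM + K*δ)) * (1/2) := by
    have hG : IntervalIntegrable (fun x => (g*(rhoM + K*δ)) * (2*(1+x/δ)^3/δ)) volume (-δ) 0 := by
      apply Continuous.intervalIntegrable; fun_prop
    have hmono := intervalIntegral.integral_mono_ae_restrict (by linarith : -δ ≤ (0:ℝ)) II2 hG
      (ae_restrict_Icc_of_Ioo (fun x hx hx0 => by
        have hxneg : x < 0 := hx.2
        have habs : |x| = -x := abs_of_neg hxneg
        have hsnn : (0:ℝ) ≤ 1 + x/δ := by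
          have h9 : (-1:ℝ) ≤ x/δ := by
            rw [le_div_iff₀ hδpos]; nlinarith [hx.1]
          linarith
        have hmax : max (1 - |x|/δ) 0 = 1 + x/δ := by
          rw [habs, max_eq_left (by rw [neg_div]; linarith [hsnn])]
          ring_nf
        have hψx : psiT δ x = (1 + x/δ)^2 := by
          unfold psiT; rw [hmax]
        have hdx : deriv (psiT δ) x = 2*(1+x/δ)/δ := by
          rw [hderivM x hxneg, hmax]
        show g * ρ0 x * psiT δ x * deriv (psiT δ) x ≤ g * (rhoM + K*δ) * (2*(1+x/δ)^3/δ)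
        rw [hψx, hdx]
        have h3 : (0:ℝ) ≤ (1+x/δ)^3 := by positivity
        have key : ρ0 x * (1+x/δ)^3 ≤ (rhoM + K*δ) * (1+x/δ)^3 :=
          mul_le_mul_of_nonneg_right (hρM x hx) h3
        calc g * ρ0 x * (1+x/δ)^2 * (2*(1+x/δ)/δ)
            = (2*g/δ) * (ρ0 x * (1+x/δ)^3) := by ring
          _ ≤ (2*g/δ) * ((rhoM + K*δ) * (1+x/δ)^3) :=
              mul_le_mul_of_nonneg_left key (by positivity)
          _ = (g*(rhoM + K*δ)) * (2*(1+x/δ)^3/δ) := by ring))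
    calc (∫ x in (-δ)..0, g * ρ0 x * psiT δ x * deriv (psiT δ) x)
        ≤ ∫ x in (-δ)..0, (g*(rhoM + K*δ)) * (2*(1+x/δ)^3/δ) := hmono
      _ = (g*(rhoM + K*δ)) * (1/2) := by
          rw [intervalIntegral.integral_const_mul, integ_p hδpos]
  -- piece 3 bound
  have hpiece3 : (∫ x in (0:ℝ)..δ, g * ρ0 x * psiT δ x * deriv (psiT δ) x)
      ≤ (-(g*(rhoP - K*δ))) * (1/2) := by
    have hG : IntervalIntegrable (fun x => (-(g*(rhoP - K*δ))) * (2*(1-x/δ)^3/δ)) volume 0 δ := by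
      apply Continuous.intervalIntegrable; fun_prop
    have hmono := intervalIntegral.integral_mono_ae_restrict (by linarith : (0:ℝ) ≤ δ) II3 hG
      (ae_restrict_Icc_of_Ioo (fun x hx hx0 => by
        have hxpos : 0 < x := hx.1
        have habs : |x| = x := abs_of_pos hxpos
        have hsnn : (0:ℝ) ≤ 1 - x/δ := by
          have h2 : x/δ ≤ 1 := by
            rw [div_le_one hδpos]; linarith [hx.2]
          linarith
        have hmax : max (1 - |x|/δ) 0 = 1 - x/δ := by
          rw [habs, max_eq_left hsnn]
        have hψx : psiT δ x = (1 - x/δ)^2 := by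
          unfold psiT; rw [hmax]
        have hdx : deriv (psiT δ) x = -(2*(1-x/δ)/δ) := by
          rw [hderivP x hxpos, hmax]
        show g * ρ0 x * psiT δ x * deriv (psiT δ) x ≤ (-(g*(rhoP - K*δ))) * (2*(1-x/δ)^3/δ)
        rw [hψx, hdx]
        have h3 : (0:ℝ) ≤ (1-x/δ)^3 := by positivity
        have key : (rhoP - K*δ) * (1-x/δ)^3 ≤ ρ0 x * (1-x/δ)^3 :=
          mul_le_mul_of_nonneg_right (hρP x hx) h3
        calc g * ρ0 x * (1-x/δ)^2 * (-(2*(1-x/δ)/δ))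
            = -((2*g/δ) * (ρ0 x * (1-x/δ)^3)) := by ring
          _ ≤ -((2*g/δ) * ((rhoP - K*δ) * (1-x/δ)^3)) := by
              apply neg_le_neg
              exact mul_le_mul_of_nonneg_left key (by positivity)
          _ = (-(g*(rhoP - K*δ))) * (2*(1-x/δ)^3/δ) := by ring))
    calc (∫ x in (0:ℝ)..δ, g * ρ0 x * psiT δ x * deriv (psiT δ) x)
        ≤ ∫ x in (0:ℝ)..δ, (-(g*(rhoP - K*δ))) * (2*(1-x/δ)^3/δ) := hmono
      _ = (-(g*(rhoP - K*δ))) * (1/2) := by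
          rw [intervalIntegral.integral_const_mul, integ_q hδpos]
  -- total integral is negative
  have hsplit : (∫ x in (-m)..ℓ, g * ρ0 x * psiT δ x * deriv (psiT δ) x)
      = (∫ x in (-m)..(-δ), g * ρ0 x * psiT δ x * deriv (psiT δ) x)
      + (∫ x in (-δ)..0, g * ρ0 x * psiT δ x * deriv (psiT δ) x)
      + (∫ x in (0:ℝ)..δ, g * ρ0 x * psiT δ x * deriv (psiT δ) x)
      + (∫ x in δ..ℓ, g * ρ0 x * psiT δ x * deriv (psiT δ) x) := by
    have e1 := intervalIntegral.integral_add_adjacent_intervals II1 II2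
    have e2 := intervalIntegral.integral_add_adjacent_intervals (II1.trans II2) II3
    have e3 := intervalIntegral.integral_add_adjacent_intervals ((II1.trans II2).trans II3) II4
    linarith [e1, e2, e3]
  have hJ : (∫ x in (-m)..ℓ, g * ρ0 x * psiT δ x * deriv (psiT δ) x) < 0 := by
    rw [hsplit, hpiece1, hpiece4]
    have h2 : g*(2*K*δ) ≤ g*((rhoP-rhoM)/2) := mul_le_mul_of_nonneg_left hδK hg.le
    have h3 : (g*(rhoM + K*δ)) * (1/2) + (-(g*(rhoP - K*δ))) * (1/2) < 0 := by
      nlinarith [mul_pos hg hjd]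
    linarith [hpiece2, hpiece3]
  -- integrability of (deriv psi)^2
  have hDsqbd : ∀ x : ℝ, x ≠ 0 → (deriv (psiT δ) x)^2 ≤ (2/δ)^2 := by
    intro x hx0
    have h2 := hDbd x hx0
    calc (deriv (psiT δ) x)^2 = |deriv (psiT δ) x|^2 := (sq_abs _).symm
      _ ≤ (2/δ)^2 := by nlinarith [abs_nonneg (deriv (psiT δ) x)]
  have IIDsq : IntervalIntegrable (fun x => (deriv (psiT δ) x)^2) volume (-m) ℓ := by
    apply IntervalIntegrable.trans (b := 0)
    · exact II_of_bdd (by linarith) (hcderivM.pow 2)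
        (fun x hx => by
          rw [abs_of_nonneg (sq_nonneg _)]
          exact hDsqbd x (ne_of_lt hx.2))
    · exact II_of_bdd (by linarith) (hcderivP.pow 2)
        (fun x hx => by
          rw [abs_of_nonneg (sq_nonneg _)]
          exact hDsqbd x (ne_of_gt hx.1))
  constructor
  · exact ⟨psiT δ, hψcont.continuousOn, hψm, hψℓ, hψ0, fun x _ hx0 => hdiff x hx0, IIDsq, hJ⟩
  -- Part 2
  intro ξ hξ
  have hξ0 : ξ ≠ 0 := ne_of_gt hξ
  set W : ℝ → ℝ := fun x => ρ0 x * ((-(deriv (psiT δ) x)/ξ)^2 + (psiT δ x)^2) with hWdef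
  have hWcontM : ContinuousOn W (Ioo (-m) 0) :=
    hcontM.mul ((((hcderivM.neg).div_const ξ).pow 2).add ((hψcont.continuousOn).pow 2))
  have hWcontP : ContinuousOn W (Ioo 0 ℓ) :=
    hcontP.mul ((((hcderivP.neg).div_const ξ).pow 2).add ((hψcont.continuousOn).pow 2))
  have hWnn : ∀ x ∈ Ioo (-m) ℓ, x ≠ 0 → 0 ≤ W x := by
    intro x hx _
    have h1 := hρbd x hx
    exact mul_nonneg (by linarith [h1.1]) (by positivity)
  have hWbd : ∀ x ∈ Ioo (-m) ℓ, x ≠ 0 → |W x| ≤ C*((2/δ)^2/ξ^2 + 1) := by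
    intro x hx hx0
    have h1 := hρbd x hx
    have hρpos : 0 < ρ0 x := lt_of_lt_of_le hc h1.1
    have hd2 := hDsqbd x hx0
    have hψ1 := psiT_le_one hδpos x
    have hψnn := psiT_nonneg δ x
    have hinner : ((-(deriv (psiT δ) x)/ξ)^2 + (psiT δ x)^2) ≤ (2/δ)^2/ξ^2 + 1 := by
      have e1 : (-(deriv (psiT δ) x)/ξ)^2 = (deriv (psiT δ) x)^2/ξ^2 := by ring
      rw [e1]
      have e2 : (deriv (psiT δ) x)^2/ξ^2 ≤ (2/δ)^2/ξ^2 := by gcongr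
      nlinarith
    rw [abs_of_nonneg (hWnn x hx hx0)]
    exact mul_le_mul h1.2 hinner (by positivity) (by linarith)
  have IIW : IntervalIntegrable W volume (-m) ℓ :=
    (II_of_bdd (by linarith) hWcontM
      (fun x hx => hWbd x ⟨hx.1, by linarith [hx.2]⟩ (ne_of_lt hx.2))).trans
    (II_of_bdd (by linarith) hWcontP
      (fun x hx => hWbd x ⟨by linarith [hx.1], hx.2⟩ (ne_of_gt hx.1)))
  set N := (1/2) * ∫ x in (-m)..ℓ, W x with hNdef
  -- N is positive
  have hIIW1 : IntervalIntegrable W volume (-m) (-(δ/2)) := IIW.mono_set (by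
    rw [uIcc_of_le (by linarith), uIcc_of_le (by linarith)]
    exact Icc_subset_Icc (by linarith) (by linarith))
  have hIIW2 : IntervalIntegrable W volume (-(δ/2)) (δ/2) := IIW.mono_set (by
    rw [uIcc_of_le (by linarith), uIcc_of_le (by linarith)]
    exact Icc_subset_Icc (by linarith) (by linarith))
  have hIIW3 : IntervalIntegrable W volume (δ/2) ℓ := IIW.mono_set (by
    rw [uIcc_of_le (by linarith), uIcc_of_le (by linarith)]
    exact Icc_subset_Icc (by linarith) (by linarith))
  have hW0a : (0:ℝ) ≤ ∫ x in (-m)..(-(δ/2)), W x := by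
    have h0 := intervalIntegral.integral_mono_ae_restrict (by linarith : -m ≤ -(δ/2))
      (intervalIntegrable_const (c := (0:ℝ))) hIIW1
      (ae_restrict_Icc_of_Ioo (fun x hx hx0 =>
        hWnn x ⟨hx.1, by linarith [hx.2]⟩ hx0))
    simpa using h0
  have hW0c : (0:ℝ) ≤ ∫ x in (δ/2)..ℓ, W x := by
    have h0 := intervalIntegral.integral_mono_ae_restrict (by linarith : δ/2 ≤ ℓ)
      (intervalIntegrable_const (c := (0:ℝ))) hIIW3
      (ae_restrict_Icc_of_Ioo (fun x hx hx0 =>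
        hWnn x ⟨by linarith [hx.1], hx.2⟩ hx0))
    simpa using h0
  have hWmid : δ * (c/16) ≤ ∫ x in (-(δ/2))..(δ/2), W x := by
    have h0 := intervalIntegral.integral_mono_ae_restrict (by linarith : -(δ/2) ≤ δ/2)
      (intervalIntegrable_const (c := c*(1/16))) hIIW2
      (ae_restrict_Icc_of_Ioo (fun x hx hx0 => by
        have hx' : x ∈ Ioo (-m) ℓ := ⟨by linarith [hx.1], by linarith [hx.2]⟩
        have h1 := (hρbd x hx').1
        have habs : |x| ≤ δ/2 := le_of_lt (abs_lt.mpr ⟨hx.1, hx.2⟩)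
        have hq4 := psiT_quarter hδpos habs
        have hsq : (1:ℝ)/16 ≤ ((-(deriv (psiT δ) x)/ξ)^2 + (psiT δ x)^2) := by
          nlinarith [sq_nonneg (-(deriv (psiT δ) x)/ξ)]
        show c*(1/16) ≤ W x
        calc c*(1/16) ≤ ρ0 x * (1/16) := by nlinarith
          _ ≤ ρ0 x * ((-(deriv (psiT δ) x)/ξ)^2 + (psiT δ x)^2) := by
              apply mul_le_mul_of_nonneg_left (by linarith) (by linarith)
          _ = W x := rfl))
    rw [intervalIntegral.integral_const] at h0
    have : (δ/2 - -(δ/2)) • (c*(1/16)) = δ * (c/16) := by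
      rw [smul_eq_mul]; ring
    linarith [this ▸ h0]
  have hWsplit : (∫ x in (-m)..ℓ, W x)
      = (∫ x in (-m)..(-(δ/2)), W x) + (∫ x in (-(δ/2))..(δ/2), W x) + (∫ x in (δ/2)..ℓ, W x) := by
    have e1 := intervalIntegral.integral_add_adjacent_intervals hIIW1 hIIW2
    have e2 := intervalIntegral.integral_add_adjacent_intervals (hIIW1.trans hIIW2) hIIW3
    linarith [e1, e2]
  have hNpos : 0 < N := by
    rw [hNdef, hWsplit]
    nlinarith [hW0a, hW0c, hWmid, mul_pos hδpos hc]
  -- normalization constant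
  set a := (Real.sqrt N)⁻¹ with hadef
  have hapos : 0 < a := inv_pos.mpr (Real.sqrt_pos.mpr hNpos)
  have ha2 : a^2 = N⁻¹ := by
    rw [hadef, inv_pow, Real.sq_sqrt hNpos.le]
  have ha2pos : 0 < a^2 := by positivity
  -- lower bound for the energy set
  have hbdd : BddBelow {e : ℝ | ∃ φ ψ : ℝ → ℝ,
      ContinuousOn ψ (Icc (-m) ℓ) ∧ ψ (-m) = 0 ∧ ψ ℓ = 0 ∧
      (∀ x ∈ Ioo (-m) ℓ, x ≠ 0 → DifferentiableAt ℝ ψ x) ∧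
      IntervalIntegrable (fun x => (φ x) ^ 2) MeasureTheory.volume (-m) ℓ ∧
      IntervalIntegrable (fun x => (deriv ψ x) ^ 2) MeasureTheory.volume (-m) ℓ ∧
      (1 / 2) * (∫ x in (-m)..ℓ, ρ0 x * ((φ x) ^ 2 + (ψ x) ^ 2)) = 1 ∧
      e = (1 / 2) * ∫ x in (-m)..ℓ,
            (Q x * ρ0 x * (deriv ψ x + ξ * φ x) ^ 2
              - 2 * g * ρ0 x * ξ * ψ x * φ x)} := by
    refine ⟨-(g*ξ), fun e he => ?_⟩
    obtain ⟨u, v, hvc, hvm, hvl, hvd, hIu, hIv, hconstr, herep⟩ := he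
    have hIM : IntervalIntegrable (fun x => ρ0 x * ((u x) ^ 2 + (v x) ^ 2)) volume (-m) ℓ := by
      by_contra hni
      rw [intervalIntegral.integral_undef hni] at hconstr
      norm_num at hconstr
    have hptw : ∀ x ∈ Ioo (-m) ℓ, x ≠ 0 →
        -((g*ξ) * (ρ0 x * ((u x) ^ 2 + (v x) ^ 2)))
          ≤ Q x * ρ0 x * (deriv v x + ξ * u x) ^ 2 - 2 * g * ρ0 x * ξ * v x * u x := by
      intro x hx _
      have h1 := hρbd x hx
      have h2 := (hQbd x hx).1
      have hρpos : 0 < ρ0 x := lt_of_lt_of_le hc h1.1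
      have hA : 0 ≤ Q x * ρ0 x * (deriv v x + ξ * u x)^2 :=
        mul_nonneg (mul_nonneg (by linarith) hρpos.le) (sq_nonneg _)
      have hB : 0 ≤ (g*ξ*ρ0 x) * (u x - v x)^2 :=
        mul_nonneg (by positivity) (sq_nonneg _)
      have key : Q x * ρ0 x * (deriv v x + ξ * u x) ^ 2 - 2 * g * ρ0 x * ξ * v x * u x
            + (g*ξ) * (ρ0 x * ((u x) ^ 2 + (v x) ^ 2))
          = (Q x * ρ0 x * (deriv v x + ξ * u x)^2) + ((g*ξ*ρ0 x) * (u x - v x)^2) := by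
        ring
      linarith [hA, hB, key]
    by_cases hfi : IntervalIntegrable (fun x =>
        Q x * ρ0 x * (deriv v x + ξ * u x) ^ 2 - 2 * g * ρ0 x * ξ * v x * u x) volume (-m) ℓ
    · have hmono : (∫ x in (-m)..ℓ, -((g*ξ) * (ρ0 x * ((u x) ^ 2 + (v x) ^ 2))))
          ≤ ∫ x in (-m)..ℓ, (Q x * ρ0 x * (deriv v x + ξ * u x) ^ 2
              - 2 * g * ρ0 x * ξ * v x * u x) :=
        intervalIntegral.integral_mono_ae_restrict (by linarith : -m ≤ ℓ)
          ((hIM.const_mul (g*ξ)).neg) hfi (ae_restrict_Icc_of_Ioo hptw)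
      have hval : (∫ x in (-m)..ℓ, -((g*ξ) * (ρ0 x * ((u x) ^ 2 + (v x) ^ 2))))
          = -((g*ξ) * 2) := by
        rw [intervalIntegral.integral_neg, intervalIntegral.integral_const_mul]
        have h2 : (∫ x in (-m)..ℓ, ρ0 x * ((u x) ^ 2 + (v x) ^ 2)) = 2 := by
          linarith [hconstr]
        rw [h2]
      rw [herep]
      rw [hval] at hmono
      linarith [hmono]
    · rw [herep, intervalIntegral.integral_undef hfi]
      have := mul_pos hg hξ
      linarith
  -- the witness pair and conclusion
  have hkey : sInf {e : ℝ | ∃ φ ψ : ℝ → ℝ,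
      ContinuousOn ψ (Icc (-m) ℓ) ∧ ψ (-m) = 0 ∧ ψ ℓ = 0 ∧
      (∀ x ∈ Ioo (-m) ℓ, x ≠ 0 → DifferentiableAt ℝ ψ x) ∧
      IntervalIntegrable (fun x => (φ x) ^ 2) MeasureTheory.volume (-m) ℓ ∧
      IntervalIntegrable (fun x => (deriv ψ x) ^ 2) MeasureTheory.volume (-m) ℓ ∧
      (1 / 2) * (∫ x in (-m)..ℓ, ρ0 x * ((φ x) ^ 2 + (ψ x) ^ 2)) = 1 ∧
      e = (1 / 2) * ∫ x in (-m)..ℓ,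
            (Q x * ρ0 x * (deriv ψ x + ξ * φ x) ^ 2
              - 2 * g * ρ0 x * ξ * ψ x * φ x)}
      ≤ a^2 * (∫ x in (-m)..ℓ, g * ρ0 x * psiT δ x * deriv (psiT δ) x) := by
    apply csInf_le hbdd
    refine ⟨fun y => a * (-(deriv (psiT δ) y)/ξ), fun y => a * psiT δ y, ?_, ?_, ?_, ?_, ?_, ?_, ?_, ?_⟩
    · exact (continuous_const.mul hψcont).continuousOn
    · simp only [hψm, mul_zero]
    · simp only [hψℓ, mul_zero]
    · exact fun x _ hx0 => (hdiff x hx0).const_mul a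
    · have heq : (fun x => ((fun y => a * (-(deriv (psiT δ) y)/ξ)) x) ^ 2)
          = fun x => (a^2/ξ^2) * ((deriv (psiT δ) x)^2) := by
        funext x; ring
      rw [heq]
      exact IIDsq.const_mul _
    · have heq : (fun x => (deriv (fun y => a * psiT δ y) x) ^ 2)
          = fun x => a^2 * ((deriv (psiT δ) x)^2) := by
        funext x
        rw [deriv_const_mul_field]
        ring
      rw [heq]
      exact IIDsq.const_mul _
    · have hcon_eq : (fun x => ρ0 x * (((fun y => a * (-(deriv (psiT δ) y)/ξ)) x) ^ 2
          + ((fun y => a * psiT δ y) x) ^ 2)) = fun x => a^2 * W x := by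
        funext x
        simp only [hWdef]
        ring
      rw [hcon_eq, intervalIntegral.integral_const_mul, ha2]
      have hW2 : (∫ x in (-m)..ℓ, W x) = 2*N := by rw [hNdef]; ring
      rw [hW2]
      field_simp
    · have hint_eq : (fun x => Q x * ρ0 x * (deriv (fun y => a * psiT δ y) x
            + ξ * ((fun y => a * (-(deriv (psiT δ) y)/ξ)) x)) ^ 2
          - 2 * g * ρ0 x * ξ * ((fun y => a * psiT δ y) x)
            * ((fun y => a * (-(deriv (psiT δ) y)/ξ)) x))
          = fun x => (2*a^2) * (g * ρ0 x * psiT δ x * deriv (psiT δ) x) := by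
        funext x
        simp only
        rw [deriv_const_mul_field]
        have hz : a * deriv (psiT δ) x + ξ * (a * (-(deriv (psiT δ) x)/ξ)) = 0 := by
          field_simp
          ring
        rw [hz]
        field_simp
        ring
      rw [hint_eq, intervalIntegral.integral_const_mul]
      ring
  have hneg : a^2 * (∫ x in (-m)..ℓ, g * ρ0 x * psiT δ x * deriv (psiT δ) x) < 0 :=
    mul_neg_of_pos_of_neg ha2pos hJ
  exact lt_of_le_of_lt hkey hneg
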